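/- Assume μν < λ²m² and set r = √(m²/(μν) − 1/λ²) > 0. For every θ ∈ ℝ and t ∈ ℂ, the point z₁ = t, z₂ = −λtr e^{−iθ} − (3σa³μ⁵/(b³ν⁴)) r² e^{−10iθ}, z₃ = −λtr e^{iθ} + (6σa³μ⁵/(b³ν⁴)) r² e^{−8iθ}, z₄ = νr e^{iθ}, z₅ = μr e^{−iθ}, z₆ = −(3σa²μ⁴/(b³ν³)) r e^{−7iθ}, z₇ = −(aμ²/(bν)) r e^{−3iθ} satisfies ∂W/∂z_i(z) = 0 for i = 4, 5, 6, 7 and V(z) = 2μνm² − μ²ν²/λ². Moreover V(w) ≥ 2μνm² − μ²ν²/λ² > 0 for every w ∈ ℂ⁷, so this 3-real-parameter family consists of global minima of V, and the strictly positive minimum value shows supersymmetry is broken with no runaway. -/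

import Mathlib

open Complex Filter Topology

/-- `σz³` model with `μν < λ²m²` and `r = √(m²/(μν) − 1/λ²) > 0`.
For every `θ ∈ ℝ` and `t ∈ ℂ` the point
`z₁ = t`, `z₂ = −λtr e^{−iθ} − (3σa³μ⁵/(b³ν⁴)) r² e^{−10iθ}`,
`z₃ = −λtr e^{iθ} + (6σa³μ⁵/(b³ν⁴)) r² e^{−8iθ}`, `z₄ = νr e^{iθ}`, `z₅ = μr e^{−iθ}`,
`z₆ = −(3σa²μ⁴/(b³ν³)) r e^{−7iθ}`, `z₇ = −(aμ²/(bν)) r e^{−3iθ}` satisfies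
`∂W/∂z_i = 0` for `i = 4,5,6,7` and `V(z) = 2μνm² − μ²ν²/λ²`. Moreover
`V(w) ≥ 2μνm² − μ²ν²/λ² > 0` for every `w ∈ ℂ⁷`, so this 3-real-parameter family consists
of global minima of `V`, and the strictly positive minimum shows SUSY breaking without
runaway. -/

lemma sigma_fderiv_aux (lam mu nu m a b sig : ℝ) (W : (Fin 7 → ℂ) → ℂ)
    (hW : ∀ z, W z = (lam : ℂ) * z 0 * (z 3 * z 4 - (m : ℂ) ^ 2) +
      (mu : ℂ) * z 1 * z 3 + (nu : ℂ) * z 2 * z 4 + (a : ℂ) * (z 4) ^ 2 * z 5 +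
      (b : ℂ) * z 3 * z 5 * z 6 + (sig : ℂ) * (z 6) ^ 3) (z : Fin 7 → ℂ) :
    fderiv ℂ W z (Pi.single 0 1) = (lam:ℂ) * (z 3 * z 4 - (m:ℂ)^2) ∧
    fderiv ℂ W z (Pi.single 1 1) = (mu:ℂ) * z 3 ∧
    fderiv ℂ W z (Pi.single 2 1) = (nu:ℂ) * z 4 ∧
    fderiv ℂ W z (Pi.single 3 1) = (lam:ℂ) * z 0 * z 4 + (mu:ℂ) * z 1 + (b:ℂ) * z 5 * z 6 ∧
    fderiv ℂ W z (Pi.single 4 1) = (lam:ℂ) * z 0 * z 3 + (nu:ℂ) * z 2 + 2*(a:ℂ) * z 4 * z 5 ∧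
    fderiv ℂ W z (Pi.single 5 1) = (a:ℂ) * (z 4)^2 + (b:ℂ) * z 3 * z 6 ∧
    fderiv ℂ W z (Pi.single 6 1) = (b:ℂ) * z 3 * z 5 + 3*(sig:ℂ) * (z 6)^2 := by
  have hWf : W = fun z : Fin 7 → ℂ => ((lam : ℂ) * z 0) * (z 3 * z 4 - (m : ℂ) ^ 2) +
      ((mu : ℂ) * z 1) * z 3 + ((nu : ℂ) * z 2) * z 4 + ((a : ℂ) * (z 4 * z 4)) * z 5 +
      (((b : ℂ) * z 3) * z 5) * z 6 + (sig : ℂ) * (z 6 * z 6 * z 6) := by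
    funext z; rw [hW]; ring
  have hp : ∀ i : Fin 7, HasFDerivAt (fun z : Fin 7 → ℂ => z i)
      (ContinuousLinearMap.proj (R := ℂ) (φ := fun _ : Fin 7 => ℂ) i) z := fun i =>
    hasFDerivAt_apply i z
  have H0 := (((((((hp 0).const_mul ((lam:ℂ))).mul (((hp 3).mul (hp 4)).sub_const ((m:ℂ)^2))).add
      (((hp 1).const_mul ((mu:ℂ))).mul (hp 3))).add
      (((hp 2).const_mul ((nu:ℂ))).mul (hp 4))).add
      ((((hp 4).mul (hp 4)).const_mul ((a:ℂ))).mul (hp 5))).add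
      ((((hp 3).const_mul ((b:ℂ))).mul (hp 5)).mul (hp 6))).add
      ((((hp 6).mul (hp 6)).mul (hp 6)).const_mul ((sig:ℂ)))
  have H0' : HasFDerivAt (fun z : Fin 7 → ℂ => ((lam : ℂ) * z 0) * (z 3 * z 4 - (m : ℂ) ^ 2) +
      ((mu : ℂ) * z 1) * z 3 + ((nu : ℂ) * z 2) * z 4 + ((a : ℂ) * (z 4 * z 4)) * z 5 +
      (((b : ℂ) * z 3) * z 5) * z 6 + (sig : ℂ) * (z 6 * z 6 * z 6)) _ z := H0
  rw [hWf, H0'.fderiv]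
  refine ⟨?_, ?_, ?_, ?_, ?_, ?_, ?_⟩ <;>
  · simp only [ContinuousLinearMap.add_apply, ContinuousLinearMap.smul_apply,
      ContinuousLinearMap.proj_apply, Pi.single_apply]
    simp
    ring

lemma sigma_lb_aux (lam mu nu m : ℝ)
    (hlam : 0 < lam) (hmu : 0 < mu) (hnu : 0 < nu) (hm : 0 < m)
    (u v : ℂ) :
    2 * mu * nu * m ^ 2 - mu ^ 2 * nu ^ 2 / lam ^ 2 ≤
      lam ^ 2 * ‖u * v - (m:ℂ) ^ 2‖ ^ 2 + mu ^ 2 * ‖u‖ ^ 2 + nu ^ 2 * ‖v‖ ^ 2 := by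
  set x := ‖u‖ with hx
  set y := ‖v‖ with hy
  set c := ‖u * v - (m:ℂ) ^ 2‖ with hc
  have hx0 : 0 ≤ x := norm_nonneg _
  have hy0 : 0 ≤ y := norm_nonneg _
  have hc0 : 0 ≤ c := norm_nonneg _
  have hc2 : m ^ 2 - x * y ≤ c := by
    have h1 : ‖((m:ℂ) ^ 2)‖ - ‖u * v‖ ≤ ‖(m:ℂ) ^ 2 - u * v‖ := norm_sub_norm_le _ _
    have h2 : ‖(m:ℂ) ^ 2 - u * v‖ = c := by rw [hc, norm_sub_rev]
    have h3 : ‖((m:ℂ) ^ 2)‖ = m ^ 2 := by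
      rw [show ((m:ℂ)^2) = ((m^2 : ℝ) : ℂ) by push_cast; ring, Complex.norm_real,
        Real.norm_eq_abs, abs_of_pos (by positivity)]
    have h4 : ‖u * v‖ = x * y := norm_mul u v
    linarith [h1, h2 ▸ h1]
  have hk : (mu * nu / lam) * lam = mu * nu := by field_simp
  have hk2 : mu ^ 2 * nu ^ 2 / lam ^ 2 = (mu * nu / lam) ^ 2 := by
    field_simp
  rw [hk2]
  nlinarith [sq_nonneg (mu * x - nu * y), sq_nonneg (lam * c - mu * nu / lam),
    mul_nonneg (by linarith : (0:ℝ) ≤ c - (m ^ 2 - x * y))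
      (by positivity : (0:ℝ) ≤ lam * (mu * nu / lam)), hk, mul_pos hmu hnu]

lemma sigma_V_lb (lam mu nu m a b sig : ℝ)
    (hlam : 0 < lam) (hmu : 0 < mu) (hnu : 0 < nu) (hm : 0 < m)
    (W : (Fin 7 → ℂ) → ℂ)
    (hW : ∀ z, W z = (lam : ℂ) * z 0 * (z 3 * z 4 - (m : ℂ) ^ 2) +
      (mu : ℂ) * z 1 * z 3 + (nu : ℂ) * z 2 * z 4 + (a : ℂ) * (z 4) ^ 2 * z 5 +
      (b : ℂ) * z 3 * z 5 * z 6 + (sig : ℂ) * (z 6) ^ 3)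
    (V : (Fin 7 → ℂ) → ℝ)
    (hV : ∀ z, V z = ∑ i, ‖fderiv ℂ W z (Pi.single i 1)‖ ^ 2)
    (w : Fin 7 → ℂ) :
    2 * mu * nu * m ^ 2 - mu ^ 2 * nu ^ 2 / lam ^ 2 ≤ V w := by
  obtain ⟨h0, h1, h2, -, -, -, -⟩ := sigma_fderiv_aux lam mu nu m a b sig W hW w
  rw [hV, Fin.sum_univ_seven, h0, h1, h2]
  have e0 : ‖(lam:ℂ) * (w 3 * w 4 - (m:ℂ)^2)‖^2 = lam^2 * ‖w 3 * w 4 - (m:ℂ)^2‖^2 := by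
    rw [norm_mul, Complex.norm_real, Real.norm_eq_abs, abs_of_pos hlam]; ring
  have e1 : ‖(mu:ℂ) * w 3‖^2 = mu^2 * ‖w 3‖^2 := by
    rw [norm_mul, Complex.norm_real, Real.norm_eq_abs, abs_of_pos hmu]; ring
  have e2 : ‖(nu:ℂ) * w 4‖^2 = nu^2 * ‖w 4‖^2 := by
    rw [norm_mul, Complex.norm_real, Real.norm_eq_abs, abs_of_pos hnu]; ring
  rw [e0, e1, e2]
  have := sigma_lb_aux lam mu nu m hlam hmu hnu hm (w 3) (w 4)
  have n3 : (0:ℝ) ≤ ‖fderiv ℂ W w (Pi.single 3 1)‖ ^ 2 := by positivity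
  have n4 : (0:ℝ) ≤ ‖fderiv ℂ W w (Pi.single 4 1)‖ ^ 2 := by positivity
  have n5 : (0:ℝ) ≤ ‖fderiv ℂ W w (Pi.single 5 1)‖ ^ 2 := by positivity
  have n6 : (0:ℝ) ≤ ‖fderiv ℂ W w (Pi.single 6 1)‖ ^ 2 := by positivity
  linarith

lemma sigma_point (lam mu nu m a b sig : ℝ)
    (hlam : 0 < lam) (hmu : 0 < mu) (hnu : 0 < nu) (hm : 0 < m)
    (ha : 0 < a) (hb : 0 < b) (hsig : 0 < sig)
    (hcond : mu * nu < lam ^ 2 * m ^ 2)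
    (r : ℝ) (hr : r = Real.sqrt (m ^ 2 / (mu * nu) - 1 / lam ^ 2))
    (W : (Fin 7 → ℂ) → ℂ)
    (hW : ∀ z, W z = (lam : ℂ) * z 0 * (z 3 * z 4 - (m : ℂ) ^ 2) +
      (mu : ℂ) * z 1 * z 3 + (nu : ℂ) * z 2 * z 4 + (a : ℂ) * (z 4) ^ 2 * z 5 +
      (b : ℂ) * z 3 * z 5 * z 6 + (sig : ℂ) * (z 6) ^ 3)
    (V : (Fin 7 → ℂ) → ℝ)
    (hV : ∀ z, V z = ∑ i, ‖fderiv ℂ W z (Pi.single i 1)‖ ^ 2)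
    (θ : ℝ) (t : ℂ) (z : Fin 7 → ℂ)
    (hz : z = ![t,
          -(lam : ℂ) * t * (r : ℂ) * Complex.exp (-(θ : ℂ) * Complex.I) -
            ((3 * sig * a ^ 3 * mu ^ 5 / (b ^ 3 * nu ^ 4) : ℝ) : ℂ) * (r : ℂ) ^ 2 *
              Complex.exp (-10 * (θ : ℂ) * Complex.I),
          -(lam : ℂ) * t * (r : ℂ) * Complex.exp ((θ : ℂ) * Complex.I) +
            ((6 * sig * a ^ 3 * mu ^ 5 / (b ^ 3 * nu ^ 4) : ℝ) : ℂ) * (r : ℂ) ^ 2 *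
              Complex.exp (-8 * (θ : ℂ) * Complex.I),
          (nu : ℂ) * (r : ℂ) * Complex.exp ((θ : ℂ) * Complex.I),
          (mu : ℂ) * (r : ℂ) * Complex.exp (-(θ : ℂ) * Complex.I),
          -((3 * sig * a ^ 2 * mu ^ 4 / (b ^ 3 * nu ^ 3) : ℝ) : ℂ) * (r : ℂ) *
            Complex.exp (-7 * (θ : ℂ) * Complex.I),
          -((a * mu ^ 2 / (b * nu) : ℝ) : ℂ) * (r : ℂ) *
            Complex.exp (-3 * (θ : ℂ) * Complex.I)]) :
      fderiv ℂ W z (Pi.single 3 1) = 0 ∧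
      fderiv ℂ W z (Pi.single 4 1) = 0 ∧
      fderiv ℂ W z (Pi.single 5 1) = 0 ∧
      fderiv ℂ W z (Pi.single 6 1) = 0 ∧
      V z = 2 * mu * nu * m ^ 2 - mu ^ 2 * nu ^ 2 / lam ^ 2 ∧
      (∀ w : Fin 7 → ℂ, V z ≤ V w) := by
  have hbC : (b:ℂ) ≠ 0 := Complex.ofReal_ne_zero.mpr hb.ne'
  have hnuC : (nu:ℂ) ≠ 0 := Complex.ofReal_ne_zero.mpr hnu.ne'
  have hmuC : (mu:ℂ) ≠ 0 := Complex.ofReal_ne_zero.mpr hmu.ne'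
  have hlamC : (lam:ℂ) ≠ 0 := Complex.ofReal_ne_zero.mpr hlam.ne'
  set E := Complex.exp ((θ:ℂ) * Complex.I) with hEdef
  set F := Complex.exp (-(θ:ℂ) * Complex.I) with hFdef
  have hEF : E * F = 1 := by
    rw [hEdef, hFdef, ← Complex.exp_add,
      show (θ:ℂ) * Complex.I + -(θ:ℂ) * Complex.I = 0 by ring, Complex.exp_zero]
  have hF3 : Complex.exp (-3 * (θ:ℂ) * Complex.I) = F ^ 3 := by
    rw [hFdef, show (-3 * (θ:ℂ) * Complex.I) = ((3:ℕ):ℂ) * (-(θ:ℂ) * Complex.I) by push_cast; ring,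
      Complex.exp_nat_mul]
  have hF7 : Complex.exp (-7 * (θ:ℂ) * Complex.I) = F ^ 7 := by
    rw [hFdef, show (-7 * (θ:ℂ) * Complex.I) = ((7:ℕ):ℂ) * (-(θ:ℂ) * Complex.I) by push_cast; ring,
      Complex.exp_nat_mul]
  have hF8 : Complex.exp (-8 * (θ:ℂ) * Complex.I) = F ^ 8 := by
    rw [hFdef, show (-8 * (θ:ℂ) * Complex.I) = ((8:ℕ):ℂ) * (-(θ:ℂ) * Complex.I) by push_cast; ring,
      Complex.exp_nat_mul]
  have hF10 : Complex.exp (-10 * (θ:ℂ) * Complex.I) = F ^ 10 := by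
    rw [hFdef, show (-10 * (θ:ℂ) * Complex.I) = ((10:ℕ):ℂ) * (-(θ:ℂ) * Complex.I) by push_cast; ring,
      Complex.exp_nat_mul]
  have hz0 : z 0 = t := by rw [hz]; rfl
  have hz1 : z 1 = -(lam : ℂ) * t * (r : ℂ) * F -
      ((3 * sig * a ^ 3 * mu ^ 5 / (b ^ 3 * nu ^ 4) : ℝ) : ℂ) * (r : ℂ) ^ 2 * F ^ 10 := by
    rw [hz, ← hF10]; rfl
  have hz2 : z 2 = -(lam : ℂ) * t * (r : ℂ) * E +
      ((6 * sig * a ^ 3 * mu ^ 5 / (b ^ 3 * nu ^ 4) : ℝ) : ℂ) * (r : ℂ) ^ 2 * F ^ 8 := by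
    rw [hz, ← hF8]; rfl
  have hz3 : z 3 = (nu : ℂ) * (r : ℂ) * E := by rw [hz]; rfl
  have hz4 : z 4 = (mu : ℂ) * (r : ℂ) * F := by rw [hz]; rfl
  have hz5 : z 5 = -((3 * sig * a ^ 2 * mu ^ 4 / (b ^ 3 * nu ^ 3) : ℝ) : ℂ) * (r : ℂ) * F ^ 7 := by
    rw [hz, ← hF7]; rfl
  have hz6 : z 6 = -((a * mu ^ 2 / (b * nu) : ℝ) : ℂ) * (r : ℂ) * F ^ 3 := by
    rw [hz, ← hF3]; rfl
  obtain ⟨hd0, hd1, hd2, hd3, hd4, hd5, hd6⟩ :=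
    sigma_fderiv_aux lam mu nu m a b sig W hW z
  have hr0 : 0 ≤ r := hr ▸ Real.sqrt_nonneg _
  have hr2 : r ^ 2 = m ^ 2 / (mu * nu) - 1 / lam ^ 2 := by
    rw [hr, Real.sq_sqrt]
    rw [sub_nonneg, div_le_div_iff₀ (by positivity) (by positivity)]
    nlinarith
  have hr2C : (r:ℂ) ^ 2 = ((m ^ 2 / (mu * nu) - 1 / lam ^ 2 : ℝ) : ℂ) := by
    rw [← Complex.ofReal_pow, hr2]
  have H3 : fderiv ℂ W z (Pi.single 3 1) = 0 := by
    rw [hd3, hz0, hz1, hz4, hz5, hz6]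
    push_cast
    field_simp
    ring
  have H4 : fderiv ℂ W z (Pi.single 4 1) = 0 := by
    rw [hd4, hz0, hz2, hz3, hz4, hz5]
    push_cast
    field_simp
    ring
  have H5 : fderiv ℂ W z (Pi.single 5 1) = 0 := by
    rw [hd5, hz3, hz4, hz6]
    push_cast
    field_simp
    linear_combination (-(a:ℂ) * (mu:ℂ)^2 * (r:ℂ)^2 * F^2) * hEF
  have H6 : fderiv ℂ W z (Pi.single 6 1) = 0 := by
    rw [hd6, hz3, hz5, hz6]
    push_cast
    field_simp
    linear_combination (-3 * (sig:ℂ) * (a:ℂ)^2 * (mu:ℂ)^4 * (r:ℂ)^2 * F^6) * hEF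
  have hreal : r ^ 2 * mu * nu * lam = m ^ 2 * lam - mu * nu / lam := by
    rw [hr2]; field_simp
  have hrC3 : (r:ℂ) ^ 2 * (mu:ℂ) * (nu:ℂ) * (lam:ℂ) =
      (m:ℂ) ^ 2 * (lam:ℂ) - (mu:ℂ) * (nu:ℂ) / (lam:ℂ) := by
    have h := congrArg (Complex.ofReal) hreal
    push_cast at h
    exact h
  have hq1 : ((-(mu * nu / lam) : ℝ) : ℂ) = -((mu:ℂ) * (nu:ℂ) / (lam:ℂ)) := by
    push_cast; ring
  have hD0 : fderiv ℂ W z (Pi.single 0 1) = ((-(mu * nu / lam) : ℝ) : ℂ) := by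
    rw [hd0, hz3, hz4, hq1]
    linear_combination ((lam:ℂ) * (mu:ℂ) * (nu:ℂ) * (r:ℂ)^2) * hEF + hrC3
  have hnE : ‖E‖ = 1 := by
    rw [hEdef, Complex.norm_exp_ofReal_mul_I]
  have hnF : ‖F‖ = 1 := by
    rw [hFdef, show -(θ:ℂ) = (((-θ : ℝ)):ℂ) by push_cast; ring,
      Complex.norm_exp_ofReal_mul_I]
  have hVz : V z = 2 * mu * nu * m ^ 2 - mu ^ 2 * nu ^ 2 / lam ^ 2 := by
    rw [hV, Fin.sum_univ_seven, H3, H4, H5, H6, hD0, hd1, hd2, hz3, hz4]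
    rw [norm_mul, norm_mul, norm_mul, norm_mul, norm_mul, hnE, hnF]
    simp only [Complex.norm_real, Real.norm_eq_abs, norm_zero]
    rw [_root_.abs_of_nonneg hr0, _root_.abs_of_pos hmu, _root_.abs_of_pos hnu,
      _root_.abs_neg, _root_.abs_of_pos (by positivity : (0:ℝ) < mu * nu / lam)]
    rw [show ‖(mu:ℂ) * (r:ℂ)‖ = mu * r from by
      rw [norm_mul, Complex.norm_real, Complex.norm_real, Real.norm_eq_abs, Real.norm_eq_abs,
        _root_.abs_of_pos hmu, _root_.abs_of_nonneg hr0]]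
    have hreal2 : r ^ 2 * (mu * nu) = m ^ 2 - mu * nu / lam ^ 2 := by
      rw [hr2]; field_simp
    linear_combination (2 * mu * nu) * hreal2
  refine ⟨H3, H4, H5, H6, hVz, fun w => ?_⟩
  rw [hVz]
  exact sigma_V_lb lam mu nu m a b sig hlam hmu hnu hm W hW V hV w

theorem sigma_z3_vacuum_family
    (lam mu nu m a b sig : ℝ)
    (hlam : 0 < lam) (hmu : 0 < mu) (hnu : 0 < nu) (hm : 0 < m)
    (ha : 0 < a) (hb : 0 < b) (hsig : 0 < sig)
    (hcond : mu * nu < lam ^ 2 * m ^ 2)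
    (r : ℝ) (hr : r = Real.sqrt (m ^ 2 / (mu * nu) - 1 / lam ^ 2))
    (W : (Fin 7 → ℂ) → ℂ)
    (hW : ∀ z, W z = (lam : ℂ) * z 0 * (z 3 * z 4 - (m : ℂ) ^ 2) +
      (mu : ℂ) * z 1 * z 3 + (nu : ℂ) * z 2 * z 4 + (a : ℂ) * (z 4) ^ 2 * z 5 +
      (b : ℂ) * z 3 * z 5 * z 6 + (sig : ℂ) * (z 6) ^ 3)
    (V : (Fin 7 → ℂ) → ℝ)
    (hV : ∀ z, V z = ∑ i, ‖fderiv ℂ W z (Pi.single i 1)‖ ^ 2) :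
    0 < r ∧
    0 < 2 * mu * nu * m ^ 2 - mu ^ 2 * nu ^ 2 / lam ^ 2 ∧
    (∀ w : Fin 7 → ℂ, 2 * mu * nu * m ^ 2 - mu ^ 2 * nu ^ 2 / lam ^ 2 ≤ V w) ∧
    ∀ (θ : ℝ) (t : ℂ),
      let z : Fin 7 → ℂ :=
        ![t,
          -(lam : ℂ) * t * (r : ℂ) * Complex.exp (-(θ : ℂ) * Complex.I) -
            ((3 * sig * a ^ 3 * mu ^ 5 / (b ^ 3 * nu ^ 4) : ℝ) : ℂ) * (r : ℂ) ^ 2 *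
              Complex.exp (-10 * (θ : ℂ) * Complex.I),
          -(lam : ℂ) * t * (r : ℂ) * Complex.exp ((θ : ℂ) * Complex.I) +
            ((6 * sig * a ^ 3 * mu ^ 5 / (b ^ 3 * nu ^ 4) : ℝ) : ℂ) * (r : ℂ) ^ 2 *
              Complex.exp (-8 * (θ : ℂ) * Complex.I),
          (nu : ℂ) * (r : ℂ) * Complex.exp ((θ : ℂ) * Complex.I),
          (mu : ℂ) * (r : ℂ) * Complex.exp (-(θ : ℂ) * Complex.I),
          -((3 * sig * a ^ 2 * mu ^ 4 / (b ^ 3 * nu ^ 3) : ℝ) : ℂ) * (r : ℂ) *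
            Complex.exp (-7 * (θ : ℂ) * Complex.I),
          -((a * mu ^ 2 / (b * nu) : ℝ) : ℂ) * (r : ℂ) *
            Complex.exp (-3 * (θ : ℂ) * Complex.I)]
      fderiv ℂ W z (Pi.single 3 1) = 0 ∧
      fderiv ℂ W z (Pi.single 4 1) = 0 ∧
      fderiv ℂ W z (Pi.single 5 1) = 0 ∧
      fderiv ℂ W z (Pi.single 6 1) = 0 ∧
      V z = 2 * mu * nu * m ^ 2 - mu ^ 2 * nu ^ 2 / lam ^ 2 ∧
      (∀ w : Fin 7 → ℂ, V z ≤ V w) := by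
  refine ⟨?_, ?_, fun w => sigma_V_lb lam mu nu m a b sig hlam hmu hnu hm W hW V hV w,
    fun θ t => sigma_point lam mu nu m a b sig hlam hmu hnu hm ha hb hsig hcond r hr
      W hW V hV θ t _ rfl⟩
  · rw [hr, Real.sqrt_pos, sub_pos, div_lt_div_iff₀ (by positivity) (by positivity)]
    nlinarith
  · have h1 : mu ^ 2 * nu ^ 2 / lam ^ 2 < mu * nu * m ^ 2 := by
      rw [div_lt_iff₀ (by positivity)]
      nlinarith [mul_pos hmu hnu]
    nlinarith [h1, mul_pos (mul_pos hmu hnu) (pow_pos hm 2)]
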